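/- Under the setup, for every edge e = (u, v) ∈ E⁺, every edge of the unique path π_T̂(u, v) between u and v in the spanning tree T̂ belongs to G; consequently the cycle γ consisting of the edge e together with π_T̂(u, v) is entirely contained in G. (Lemma 4.4 of the paper.) -/

import Mathlib

open SimpleGraph

/-- Lemma 4.4: for every edge e = (u,v) ∈ E⁺, every edge of the unique path between u and v in the spanning tree T̂ belongs to G; consequently the cycle consisting of e together with that path is entirely contained in G. -/
theorem lemma_4_4_cycle_in_G
    {V : Type*} [Fintype V] [DecidableEq V]
    -- `K` is a finite connected simple graph on vertex set `V`
    (K : SimpleGraph V) (hK : K.Connected)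
    -- `F` is a spanning forest of `K` (an acyclic subgraph on all of `V`)
    (F : SimpleGraph V) (hFK : F ≤ K) (hFacyclic : F.IsAcyclic)
    -- a choice of root in each connected component of `F`
    (root : V → V)
    (hrootReach : ∀ v : V, F.Reachable v (root v))
    (hrootConst : ∀ u v : V, F.Reachable u v → root u = root v)
    -- `pathToRoot v` is the unique path in `F` from `v` to the root of its component
    (pathToRoot : (v : V) → F.Walk v (root v))
    (hpathToRoot : ∀ v : V, (pathToRoot v).IsPath)
    -- `Eneg` and `Epos` are disjoint sets of edges of `K`, disjoint from the edges of `F`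
    (Eneg Epos : Set (Sym2 V))
    (hEnegK : Eneg ⊆ K.edgeSet) (hEposK : Epos ⊆ K.edgeSet)
    (hdisjNP : Disjoint Eneg Epos)
    (hdisjNF : Disjoint Eneg F.edgeSet) (hdisjPF : Disjoint Epos F.edgeSet)
    -- `That` (= T̂) is the spanning tree with edge set E(F) ∪ Eneg
    (That : SimpleGraph V)
    (hThatEdges : That.edgeSet = F.edgeSet ∪ Eneg)
    (hThatTree : That.IsTree)
    -- `GEdges` is the edge set of the output graph G: the union over e = (u,v) ∈ Eneg ∪ Epos
    -- of {e} ∪ path(u) ∪ path(v); `GVerts` is the set of vertices incident to an edge of G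
    (GEdges : Set (Sym2 V))
    (hGEdges : GEdges = {s : Sym2 V | ∃ u v : V, s(u, v) ∈ Eneg ∪ Epos ∧
        (s = s(u, v) ∨ s ∈ (pathToRoot u).edges ∨ s ∈ (pathToRoot v).edges)})
    (GVerts : Set V)
    (hGVerts : GVerts = {x : V | ∃ s ∈ GEdges, x ∈ s}) :
    ∀ u v : V, s(u, v) ∈ Epos →
      ∀ (p : That.Walk u v), p.IsPath →
        (∀ e ∈ p.edges, e ∈ GEdges) ∧ s(u, v) ∈ GEdges := by
  intro u v huv p hp
  have hGE : ∀ x y : V, s(x, y) ∈ Eneg ∪ Epos →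
      s(x, y) ∈ GEdges ∧ (∀ e ∈ (pathToRoot x).edges, e ∈ GEdges) ∧
        (∀ e ∈ (pathToRoot y).edges, e ∈ GEdges) := by
    intro x y hxy
    refine ⟨?_, ?_, ?_⟩
    · rw [hGEdges]; exact ⟨x, y, hxy, Or.inl rfl⟩
    · intro e he; rw [hGEdges]; exact ⟨x, y, hxy, Or.inr (Or.inl he)⟩
    · intro e he; rw [hGEdges]; exact ⟨x, y, hxy, Or.inr (Or.inr he)⟩
  refine ⟨?_, (hGE u v (Or.inr huv)).1⟩
  -- the auxiliary graph `H`: the part of `That` whose edges are already known to be in `G`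
  let H : SimpleGraph V :=
    { Adj := fun x y => That.Adj x y ∧ s(x, y) ∈ GEdges
      symm := by
        refine ⟨fun x y h => ?_⟩
        exact ⟨h.1.symm, by rw [Sym2.eq_swap]; exact h.2⟩
      loopless := ⟨fun x h => That.loopless.irrefl x h.1⟩ }
  have hFT : ∀ ⦃x y : V⦄, F.Adj x y → That.Adj x y := by
    intro x y hxy
    have : s(x, y) ∈ That.edgeSet := by
      rw [hThatEdges]; exact Or.inl hxy
    exact this
  -- a path to the root all of whose edges are in `GEdges` gives `H`-reachability
  have transferPath : ∀ x : V, (∀ e ∈ (pathToRoot x).edges, e ∈ GEdges) →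
      H.Reachable x (root x) := by
    intro x hx
    refine ⟨(pathToRoot x).transfer H ?_⟩
    intro e he
    have heF : e ∈ F.edgeSet := (pathToRoot x).edges_subset_edgeSet he
    induction e with
    | h a b =>
      exact H.mem_edgeSet.mpr ⟨hFT (F.mem_edgeSet.mp heF), hx _ he⟩
  -- key step: roots of `That`-adjacent vertices are `H`-reachable from each other
  have key : ∀ a b : V, That.Adj a b → H.Reachable (root a) (root b) := by
    intro a b hab
    have hmem : s(a, b) ∈ F.edgeSet ∪ Eneg := by
      rw [← hThatEdges]; exact hab
    rcases hmem with hF | hN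
    · have : root a = root b := hrootConst a b (F.mem_edgeSet.mp hF).reachable
      rw [this]
    · have h3 := hGE a b (Or.inl hN)
      have ha := transferPath a h3.2.1
      have hb := transferPath b h3.2.2
      have hab' : H.Adj a b := ⟨hab, h3.1⟩
      exact ha.symm.trans (hab'.reachable.trans hb)
  have rootsReach : ∀ {a b : V}, That.Walk a b → H.Reachable (root a) (root b) := by
    intro a b w
    induction w with
    | nil => exact Reachable.refl _
    | cons h q ih => exact (key _ _ h).trans ih
  -- hence `u` and `v` are `H`-reachable
  have hreach : H.Reachable u v := by
    have h3 := hGE u v (Or.inr huv)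
    obtain ⟨w⟩ := hThatTree.isConnected.preconnected u v
    exact (transferPath u h3.2.1).trans ((rootsReach w).trans (transferPath v h3.2.2).symm)
  obtain ⟨W'⟩ := hreach
  have hW'G : ∀ e ∈ W'.edges, e ∈ GEdges := by
    intro e he
    have heH : e ∈ H.edgeSet := W'.edges_subset_edgeSet he
    induction e with
    | h a b => exact (H.mem_edgeSet.mp heH).2
  have hW'T : ∀ e ∈ W'.edges, e ∈ That.edgeSet := by
    intro e he
    have heH : e ∈ H.edgeSet := W'.edges_subset_edgeSet he
    induction e with
    | h a b => exact That.mem_edgeSet.mpr (H.mem_edgeSet.mp heH).1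
  -- transfer to a walk in `That`; since `That` is a tree, `p` is its bypass
  have hpW : p.edges ⊆ (W'.transfer That hW'T).edges := by
    have hb : (W'.transfer That hW'T).bypass.IsPath := (W'.transfer That hW'T).bypass_isPath
    have hq := hThatTree.IsAcyclic.path_unique ⟨p, hp⟩ ⟨(W'.transfer That hW'T).bypass, hb⟩
    have hpe : p = (W'.transfer That hW'T).bypass := congrArg Subtype.val hq
    rw [hpe]
    exact (W'.transfer That hW'T).edges_bypass_subset
  intro e he
  have heW : e ∈ (W'.transfer That hW'T).edges := hpW he
  rw [Walk.edges_transfer] at heW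
  exact hW'G e heW
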